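/- arXiv:2506.21374 — 3 statements merged into one kernel-verified Lean document; each statement's English description precedes it below -/
import Mathlib

section
/- Fix training inputs x_1,…,x_k ∈ ℝ^d and labels y_1,…,y_k ∈ ℝ. Let a_i : ℝ → ℝ and w_i : ℝ → ℝ^d (i = 1,…,n) be differentiable curves solving the gradient-flow equations of the empirical squared loss of the two-layer ReLU network, i.e., for all t ∈ ℝ and all i: a_i'(t) = −(1/k)·Σ_{j=1}^k σ(⟨w_i(t), x_j⟩)·r_j(t) and w_i'(t) = −(1/k)·Σ_{j=1}^k a_i(t)·𝟙{⟨w_i(t), x_j⟩ > 0}·r_j(t)·x_j, where r_j(t) = Σ_{m=1}^n a_m(t)·σ(⟨w_m(t), x_j⟩) − y_j. Then for every i and every t, a_i(t)² − ‖w_i(t)‖² = a_i(0)² − ‖w_i(0)‖². In particular, under balanced initialization a_i(0)² = ‖w_i(0)‖² for all i, one has a_i(t)² = ‖w_i(t)‖² for all i ∈ [n] and all t ≥ 0. -/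
open MeasureTheory

/-- Balancedness conservation along the gradient flow of the empirical squared loss of a
two-layer ReLU network: along solutions of the gradient-flow ODEs,
`a i t ^ 2 - ‖w i t‖ ^ 2` is conserved; in particular, under balanced initialization,
`a i t ^ 2 = ‖w i t‖ ^ 2` for all `i` and all `t ≥ 0`. -/
theorem balancedness_conservation (d k n : ℕ) (hd : 1 ≤ d) (hk : 1 ≤ k) (hn : 1 ≤ n)
    (x : Fin k → EuclideanSpace ℝ (Fin d)) (y : Fin k → ℝ)
    (a : Fin n → ℝ → ℝ) (w : Fin n → ℝ → EuclideanSpace ℝ (Fin d))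
    (r : Fin k → ℝ → ℝ)
    (hr : ∀ j t, r j t = (∑ m, a m t * max (inner ℝ (w m t) (x j) : ℝ) 0) - y j)
    (ha : ∀ i t, HasDerivAt (a i)
      (-(1 / (k : ℝ)) * ∑ j, max (inner ℝ (w i t) (x j) : ℝ) 0 * r j t) t)
    (hw : ∀ i t, HasDerivAt (w i)
      ((-(1 / (k : ℝ))) • ∑ j,
        (a i t * (if (0 : ℝ) < (inner ℝ (w i t) (x j) : ℝ) then (1 : ℝ) else 0) * r j t)
          • x j) t) :
    (∀ i t, (a i t) ^ 2 - ‖w i t‖ ^ 2 = (a i 0) ^ 2 - ‖w i 0‖ ^ 2) ∧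
    ((∀ i, (a i 0) ^ 2 = ‖w i 0‖ ^ 2) →
      ∀ i t, 0 ≤ t → (a i t) ^ 2 = ‖w i t‖ ^ 2) := by
  have key : ∀ i t, (a i t) ^ 2 - ‖w i t‖ ^ 2 = (a i 0) ^ 2 - ‖w i 0‖ ^ 2 := by
    intro i
    have hderiv : ∀ t, HasDerivAt (fun t => (a i t) ^ 2 - ‖w i t‖ ^ 2) 0 t := by
      intro t
      set A' : ℝ := -(1 / (k : ℝ)) * ∑ j, max (inner ℝ (w i t) (x j) : ℝ) 0 * r j t with hA'
      have h1 : HasDerivAt (fun t => (a i t) ^ 2) (2 * a i t * A') t := by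
        have := (ha i t).fun_pow 2
        convert this using 1
        push_cast
        · rfl
        · rfl
        · rw [hA']; ring
      have h2 := (hw i t).norm_sq
      have hinner : (inner ℝ (w i t) ((-(1 / (k : ℝ))) • ∑ j,
          (a i t * (if (0 : ℝ) < (inner ℝ (w i t) (x j) : ℝ) then (1 : ℝ) else 0) * r j t)
            • x j) : ℝ) = a i t * A' := by
        rw [real_inner_smul_right, inner_sum (𝕜 := ℝ)]
        rw [hA']
        rw [show a i t * (-(1 / (k : ℝ)) * ∑ j, max (inner ℝ (w i t) (x j) : ℝ) 0 * r j t)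
            = -(1 / (k : ℝ)) * ∑ j, a i t * (max (inner ℝ (w i t) (x j) : ℝ) 0 * r j t) by
          simp only [Finset.mul_sum]
          exact Finset.sum_congr rfl fun j _ => by ring]
        congr 1
        refine Finset.sum_congr rfl fun j _ => ?_
        rw [real_inner_smul_right]
        by_cases h : (0 : ℝ) < (inner ℝ (w i t) (x j) : ℝ)
        · rw [if_pos h, max_eq_left h.le]; ring
        · rw [if_neg h, max_eq_right (not_lt.mp h)]; ring
      rw [hinner] at h2
      have := h1.sub h2
      simpa [mul_comm, mul_assoc, mul_left_comm, Pi.sub_def] using this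
    intro t
    have hdiff : Differentiable ℝ (fun t => (a i t) ^ 2 - ‖w i t‖ ^ 2) :=
      fun t => (hderiv t).differentiableAt
    have hzero : ∀ t, deriv (fun t => (a i t) ^ 2 - ‖w i t‖ ^ 2) t = 0 :=
      fun t => (hderiv t).deriv
    exact is_const_of_deriv_eq_zero hdiff hzero t 0
  refine ⟨key, fun hbal i t _ => ?_⟩
  have := key i t
  have h0 := hbal i
  linarith
end

section
/- Let n, p ≥ 1, let f : ℝ^n → ℝ be differentiable, and define F : (ℝ^n)^p → ℝ by F(w_1,…,w_p) = f(θ), where θ ∈ ℝ^n is the entrywise (Hadamard) product with coordinates θ_k = ∏_{l=1}^p w_{l,k}. Then for every layer index l ∈ [p] and coordinate k ∈ [n], the partial derivative of F with respect to the entry w_{l,k} equals (∂f/∂θ_k)(θ) · ∏_{j ≠ l} w_{j,k}. Consequently, for every k and all indices l, m ∈ [p] with |w_{l,k}| ≤ |w_{m,k}|, one has |∂F/∂w_{m,k}(w_1,…,w_p)| ≤ |∂F/∂w_{l,k}(w_1,…,w_p)|; in particular, if |w_{1,k}| ≤ ⋯ ≤ |w_{p,k}| for all k ∈ [n], then |∂F/∂w_{1,k}|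 ≥ ⋯ ≥ |∂F/∂w_{p,k}| for all k ∈ [n]. -/
open Finset

/-- Gradient ordering for Hadamard overparameterization: for
`F(w_1, …, w_p) = f(θ)` with `θ_k = ∏ l, w_{l,k}`, the partial derivative with respect
to the entry `w_{l,k}` equals `(∂f/∂θ_k)(θ) * ∏_{j ≠ l} w_{j,k}`; consequently,
entries of smaller magnitude receive gradients of larger magnitude, and if the layers
are ordered by magnitude in every coordinate then the gradient magnitudes are ordered
in reverse. -/
theorem hadamard_gradient_ordering (n p : ℕ) (hn : 1 ≤ n) (hp : 1 ≤ p)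
    (f : (Fin n → ℝ) → ℝ) (hf : Differentiable ℝ f)
    (W : Fin p → Fin n → ℝ)
    (F : (Fin p → Fin n → ℝ) → ℝ)
    (hF : ∀ V : Fin p → Fin n → ℝ, F V = f (fun k => ∏ l, V l k)) :
    (∀ (l : Fin p) (k : Fin n),
      fderiv ℝ F W (Pi.single l (Pi.single k 1))
        = fderiv ℝ f (fun k' => ∏ l', W l' k') (Pi.single k 1)
          * ∏ j ∈ univ.erase l, W j k) ∧
    (∀ (k : Fin n) (l m : Fin p), |W l k| ≤ |W m k| →
      |fderiv ℝ F W (Pi.single m (Pi.single k 1))|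
        ≤ |fderiv ℝ F W (Pi.single l (Pi.single k 1))|) ∧
    ((∀ (k : Fin n) (l m : Fin p), l ≤ m → |W l k| ≤ |W m k|) →
      ∀ (k : Fin n) (l m : Fin p), l ≤ m →
        |fderiv ℝ F W (Pi.single m (Pi.single k 1))|
          ≤ |fderiv ℝ F W (Pi.single l (Pi.single k 1))|) := by
  classical
  let ev : Fin p → Fin n → ((Fin p → Fin n → ℝ) →L[ℝ] ℝ) := fun l k =>
    (ContinuousLinearMap.proj k : (Fin n → ℝ) →L[ℝ] ℝ).comp
      (ContinuousLinearMap.proj l : (Fin p → Fin n → ℝ) →L[ℝ] (Fin n → ℝ))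
  let θ : (Fin p → Fin n → ℝ) → (Fin n → ℝ) := fun V k => ∏ l, V l k
  let D : (Fin p → Fin n → ℝ) →L[ℝ] (Fin n → ℝ) := ContinuousLinearMap.pi
    (fun k => ∑ l, (∏ j ∈ univ.erase l, W j k) • ev l k)
  have hθ : HasFDerivAt θ D W := by
    rw [hasFDerivAt_pi']
    intro k
    have h1 : HasFDerivAt (fun V : Fin p → Fin n → ℝ => ∏ l, V l k)
        (∑ l, (∏ j ∈ univ.erase l, W j k) • ev l k) W :=
      HasFDerivAt.finset_prod (fun l _ => (ev l k).hasFDerivAt)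
    exact h1.congr_fderiv (ContinuousLinearMap.ext fun V => rfl)
  have hFeq : F = f ∘ θ := by
    funext V; simp only [hF V, Function.comp, θ]
  have hfd := (hf (θ W)).hasFDerivAt
  have hFd : HasFDerivAt F ((fderiv ℝ f (θ W)).comp D) W := by
    rw [hFeq]; exact hfd.comp W hθ
  have hfderivF : fderiv ℝ F W = (fderiv ℝ f (θ W)).comp D := hFd.fderiv
  have hDapp : ∀ (l : Fin p) (k : Fin n),
      D (Pi.single l (Pi.single k 1)) = Pi.single k (∏ j ∈ univ.erase l, W j k) := by
    intro l k
    funext k'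
    simp only [D, ContinuousLinearMap.pi_apply, ContinuousLinearMap.sum_apply,
      ContinuousLinearMap.smul_apply, ev, ContinuousLinearMap.comp_apply,
      ContinuousLinearMap.proj_apply, smul_eq_mul]
    rw [Finset.sum_eq_single l]
    · rcases eq_or_ne k' k with rfl | hk
      · simp
      · simp [Pi.single_eq_of_ne hk]
    · intro b _ hb
      simp [Pi.single_eq_of_ne hb]
    · simp
  have key : ∀ (l : Fin p) (k : Fin n),
      fderiv ℝ F W (Pi.single l (Pi.single k 1))
        = fderiv ℝ f (fun k' => ∏ l', W l' k') (Pi.single k 1)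
          * ∏ j ∈ univ.erase l, W j k := by
    intro l k
    rw [hfderivF]
    simp only [ContinuousLinearMap.comp_apply, hDapp]
    have h2 : (Pi.single k (∏ j ∈ univ.erase l, W j k) : Fin n → ℝ)
        = (∏ j ∈ univ.erase l, W j k) • (Pi.single k 1 : Fin n → ℝ) := by
      funext k'; rcases eq_or_ne k' k with rfl | h
      · simp
      · simp [Pi.single_eq_of_ne h]
    rw [h2, map_smul]
    have hθW : θ W = fun k' => ∏ l', W l' k' := rfl
    rw [hθW, smul_eq_mul]
    ring
  have part2 : ∀ (k : Fin n) (l m : Fin p), |W l k| ≤ |W m k| →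
      |fderiv ℝ F W (Pi.single m (Pi.single k 1))|
        ≤ |fderiv ℝ F W (Pi.single l (Pi.single k 1))| := by
    intro k l m hlm
    rw [key, key]
    rcases eq_or_ne l m with rfl | hne
    · exact le_refl _
    · rw [abs_mul, abs_mul]
      apply mul_le_mul_of_nonneg_left _ (abs_nonneg _)
      rw [← Finset.prod_erase_mul _ _
          (Finset.mem_erase.2 ⟨hne, Finset.mem_univ l⟩ : l ∈ univ.erase m),
        ← Finset.prod_erase_mul _ _
          (Finset.mem_erase.2 ⟨hne.symm, Finset.mem_univ m⟩ : m ∈ univ.erase l),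
        Finset.erase_right_comm, abs_mul, abs_mul]
      exact mul_le_mul_of_nonneg_left hlm (abs_nonneg _)
  exact ⟨key, part2, fun h k l m hlm => part2 k l m (h k l m hlm)⟩
end

section
/- Let f : ℝ^n → ℝ be differentiable and L-smooth with L > 0 (‖∇f(x) − ∇f(y)‖ ≤ L·‖x − y‖ for all x, y), bounded below by f* ∈ ℝ (f(θ) ≥ f* for all θ), and satisfying the Polyak–Łojasiewicz inequality with constant Λ > 0: (1/2)·‖∇f(θ)‖² ≥ Λ·(f(θ) − f*) for all θ ∈ ℝ^n. Let 0 < c ≤ C and for each t ∈ ℕ let z_t ∈ ℝ^n satisfy c ≤ z_{t,k} ≤ C for every coordinate k. Consider the diagonally preconditioned gradient descent iterates θ_{t+1} = θ_t − η·(z_t ⊙ ∇f(θ_t)) with step size 0 < η ≤ 2c/(L·C²). Then for every t ∈ ℕ, f(θ_{t+1}) − f* ≤ (1 − Λ·η·(2c − η·L·C²))·(f(θ_t) − f*). -/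
open MeasureTheory

open scoped RealInnerProductSpace

lemma descent_lemma {F : Type*} [NormedAddCommGroup F] [InnerProductSpace ℝ F]
    [CompleteSpace F]
    (f : F → ℝ) (hf : Differentiable ℝ f) (L : ℝ) (hL : 0 ≤ L)
    (hsmooth : ∀ x y, ‖gradient f x - gradient f y‖ ≤ L * ‖x - y‖)
    (x v : F) :
    f (x + v) ≤ f x + ⟪gradient f x, v⟫ + L / 2 * ‖v‖ ^ 2 := by
  set g : ℝ → ℝ := fun t => f (x + t • v) with hg
  have hderiv : ∀ t : ℝ, HasDerivAt g ⟪gradient f (x + t • v), v⟫ t := by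
    intro t
    have hline : HasDerivAt (fun t : ℝ => x + t • v) v t :=
      by simpa using ((hasDerivAt_id t).smul_const v).const_add x
    have hF := ((hf (x + t • v)).hasGradientAt).hasFDerivAt
    have := hF.comp_hasDerivAt t hline
    simpa [InnerProductSpace.toDual_apply_apply, hg, Function.comp_def] using this
  have hgradcont : Continuous (fun y => gradient f y) := by
    have : LipschitzWith (Real.toNNReal L) (fun y => gradient f y) := by
      apply LipschitzWith.of_dist_le_mul
      intro a b
      simpa [dist_eq_norm, Real.coe_toNNReal L hL] using hsmooth a b
    exact this.continuous
  have hcont : Continuous (fun t : ℝ => ⟪gradient f (x + t • v), v⟫) := by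
    exact (hgradcont.comp (by continuity)).inner continuous_const
  have hint : ∫ t in (0:ℝ)..1, ⟪gradient f (x + t • v), v⟫ = g 1 - g 0 := by
    exact intervalIntegral.integral_eq_sub_of_hasDerivAt (fun t _ => hderiv t)
      (hcont.intervalIntegrable 0 1)
  have hbound : ∫ t in (0:ℝ)..1, ⟪gradient f (x + t • v), v⟫
      ≤ ∫ t in (0:ℝ)..1, (⟪gradient f x, v⟫ + L * t * ‖v‖ ^ 2) := by
    apply intervalIntegral.integral_mono_on (by norm_num)
      (hcont.intervalIntegrable 0 1)
      ((Continuous.intervalIntegrable (by continuity :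
        Continuous fun t : ℝ => ⟪gradient f x, v⟫ + L * t * ‖v‖ ^ 2) 0 1))
    intro t ht
    rw [Set.mem_Icc] at ht
    have h1 : ⟪gradient f (x + t • v), v⟫ - ⟪gradient f x, v⟫
        = ⟪gradient f (x + t • v) - gradient f x, v⟫ := by
      rw [inner_sub_left]
    have h2 : ⟪gradient f (x + t • v) - gradient f x, v⟫
        ≤ ‖gradient f (x + t • v) - gradient f x‖ * ‖v‖ :=
      real_inner_le_norm _ _
    have h3 : ‖gradient f (x + t • v) - gradient f x‖ ≤ L * (t * ‖v‖) := by
      have := hsmooth (x + t • v) x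
      simpa [norm_smul, abs_of_nonneg ht.1] using this
    nlinarith [norm_nonneg v, mul_nonneg (mul_nonneg hL ht.1) (norm_nonneg v)]
  have hval : ∫ t in (0:ℝ)..1, (⟪gradient f x, v⟫ + L * t * ‖v‖ ^ 2)
      = ⟪gradient f x, v⟫ + L / 2 * ‖v‖ ^ 2 := by
    rw [intervalIntegral.integral_add (intervalIntegrable_const)
      (Continuous.intervalIntegrable (by continuity :
        Continuous fun t : ℝ => L * t * ‖v‖ ^ 2) 0 1)]
    simp only [intervalIntegral.integral_const]
    have : ∫ t in (0:ℝ)..1, L * t * ‖v‖ ^ 2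
        = L * ‖v‖^2 * ∫ t in (0:ℝ)..1, t := by
      rw [← intervalIntegral.integral_const_mul]; congr 1; ext t; ring
    rw [this, integral_id]
    rw [smul_eq_mul]
    ring
  have : g 1 - g 0 ≤ ⟪gradient f x, v⟫ + L / 2 * ‖v‖ ^ 2 := by
    rw [← hint, ← hval]; exact hbound
  simp only [hg, one_smul, zero_smul, add_zero] at this
  linarith

set_option maxHeartbeats 1000000

/-- One-step contraction for diagonally preconditioned gradient descent under `L`-smoothness
and the Polyak–Łojasiewicz inequality: with preconditioner entries in `[c, C]` and step size
`0 < η ≤ 2c/(LC²)`, the suboptimality contracts by the factor `1 - Λη(2c - ηLC²)` at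
every step. -/
theorem preconditioned_gd_one_step_contraction (n : ℕ)
    (f : EuclideanSpace ℝ (Fin n) → ℝ) (hf : Differentiable ℝ f)
    (L : ℝ) (hL : 0 < L)
    (hsmooth : ∀ x y : EuclideanSpace ℝ (Fin n),
      ‖gradient f x - gradient f y‖ ≤ L * ‖x - y‖)
    (fstar : ℝ) (hbdd : ∀ θ, fstar ≤ f θ)
    (Λ : ℝ) (hΛ : 0 < Λ)
    (hPL : ∀ θ, Λ * (f θ - fstar) ≤ (1 / 2) * ‖gradient f θ‖ ^ 2)
    (c C : ℝ) (hc : 0 < c) (hcC : c ≤ C)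
    (z : ℕ → Fin n → ℝ) (hz : ∀ t i, c ≤ z t i ∧ z t i ≤ C)
    (η : ℝ) (hη : 0 < η) (hη2 : η ≤ 2 * c / (L * C ^ 2))
    (θ : ℕ → EuclideanSpace ℝ (Fin n))
    (hstep : ∀ t, θ (t + 1)
      = θ t - η • (WithLp.equiv 2 (Fin n → ℝ)).symm
          (fun i => z t i * gradient f (θ t) i)) :
    ∀ t, f (θ (t + 1)) - fstar
      ≤ (1 - Λ * η * (2 * c - η * L * C ^ 2)) * (f (θ t) - fstar) := by
  intro t
  set x := θ t with hx
  set g : EuclideanSpace ℝ (Fin n) := gradient f x with hgdef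
  set d : EuclideanSpace ℝ (Fin n) :=
    (WithLp.equiv 2 (Fin n → ℝ)).symm (fun i => z t i * g i) with hddef
  have hC : 0 < C := lt_of_lt_of_le hc hcC
  have hcoef : η * L * C ^ 2 ≤ 2 * c := by
    have h := (le_div_iff₀ (by positivity : (0:ℝ) < L * C ^ 2)).mp hη2
    nlinarith
  -- apply descent lemma with v = -(η • d)
  have hdesc := descent_lemma f hf L hL.le hsmooth x (-(η • d))
  have hθ : θ (t + 1) = x + -(η • d) := by
    rw [hstep t]; exact sub_eq_add_neg _ _
  -- inner products in coordinates
  have hdi : ∀ i, d i = z t i * g i := fun i => rfl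
  have hinner_gd : ⟪g, d⟫ = ∑ i, z t i * (g i)^2 := by
    rw [PiLp.inner_apply]
    congr 1; ext i; rw [hdi i]; simp [RCLike.inner_apply]; ring
  have hnormg : ‖g‖ ^ 2 = ∑ i, (g i)^2 := by
    rw [← real_inner_self_eq_norm_sq, PiLp.inner_apply]
    congr 1; ext i; simp [RCLike.inner_apply]
  have hnormd : ‖d‖ ^ 2 = ∑ i, (z t i * g i)^2 := by
    rw [← real_inner_self_eq_norm_sq, PiLp.inner_apply]
    congr 1; ext i; rw [hdi i]; simp [RCLike.inner_apply]; rw [← abs_mul, sq_abs]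
  have hgd_lb : c * ‖g‖ ^ 2 ≤ ⟪g, d⟫ := by
    rw [hinner_gd, hnormg, Finset.mul_sum]
    apply Finset.sum_le_sum
    intro i _
    nlinarith [(hz t i).1, sq_nonneg (g i)]
  have hd_ub : ‖d‖ ^ 2 ≤ C ^ 2 * ‖g‖ ^ 2 := by
    rw [hnormd, hnormg, Finset.mul_sum]
    apply Finset.sum_le_sum
    intro i _
    have h1 := (hz t i).1
    have h2 := (hz t i).2
    have h0 : 0 ≤ z t i := hc.le.trans h1
    have hzz : z t i * z t i ≤ C * C := mul_le_mul h2 h2 h0 (h0.trans h2)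
    nlinarith [sq_nonneg (g i)]
  have hdesc : f (x + -(η • d)) ≤ f x + ⟪g, -(η • d)⟫ + L / 2 * ‖-(η • d)‖ ^ 2 :=
    descent_lemma f hf L hL.le hsmooth x (-(η • d))
  have hinner_neg : (⟪g, -(η • d)⟫ : ℝ) = -(η * ⟪g, d⟫) := by
    rw [inner_neg_right, real_inner_smul_right]
  have hnorm_neg : ‖-(η • d)‖ ^ 2 = η ^ 2 * ‖d‖ ^ 2 := by
    rw [norm_neg, norm_smul]
    simp [abs_of_pos hη]
    ring
  rw [hinner_neg, hnorm_neg] at hdesc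
  rw [← hθ] at hdesc
  have hPLx := hPL x
  have hfx := hbdd x
  have hG : (0:ℝ) ≤ ‖g‖ ^ 2 := sq_nonneg _
  have h1 : η * (c * ‖g‖ ^ 2) ≤ η * ⟪g, d⟫ :=
    mul_le_mul_of_nonneg_left hgd_lb hη.le
  have h2 : (L / 2 * η ^ 2) * ‖d‖ ^ 2 ≤ (L / 2 * η ^ 2) * (C ^ 2 * ‖g‖ ^ 2) :=
    mul_le_mul_of_nonneg_left hd_ub (by positivity)
  have hcoef2 : 0 ≤ η * (2 * c - η * L * C ^ 2) := by
    apply mul_nonneg hη.le; linarith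
  have h3 : (η * (2 * c - η * L * C ^ 2)) * (Λ * (f x - fstar))
      ≤ (η * (2 * c - η * L * C ^ 2)) * (1 / 2 * ‖g‖ ^ 2) :=
    mul_le_mul_of_nonneg_left hPLx hcoef2
  clear_value x g d
  clear hstep hsmooth hf hPL hbdd hz hθ hdi hinner_gd hnormg hnormd hgd_lb hd_ub hinner_neg hnorm_neg
  nlinarith [h1, h2, h3, hdesc]
end
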